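/- For the Generalized Randomized Response mechanism GRR^α with output probabilities P(Y=y|X=x) = e^α/(e^α + a − 1) if y = x and 1/(e^α + a − 1) otherwise, the maximal LIP leakage with respect to S equals max_{x,s} | ln( (1 + (e^α − 1) p_{x|s}) / (1 + (e^α − 1) p_x) ) |. That is, for all y, s: P(Y=y|S=s)/P(Y=y) = (1 + (e^α − 1) p_{y|s}) / (1 + (e^α − 1) p_y). -/

import Mathlib

/-- For the Generalised Randomized Response mechanism `GRR^α`, the LIP ratio satisfies
`P(Y=y|S=s)/P(Y=y) = (1 + (e^α − 1) p_{y|s}) / (1 + (e^α − 1) p_y)`,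
where `p_y = ∑ s, pS s * pXgS s y`. -/
theorem grr_lip_ratio
    {a : ℕ} (ha : 1 ≤ a) {S : Type*} [Fintype S]
    (pS : S → ℝ) (pXgS : S → Fin a → ℝ) (α : ℝ) (hα : 0 ≤ α)
    (hpS : ∀ s, 0 ≤ pS s) (hpS1 : ∑ s, pS s = 1)
    (hpXgS : ∀ s x, 0 ≤ pXgS s x) (hpXgS1 : ∀ s, ∑ x, pXgS s x = 1) :
    ∀ (y : Fin a) (s : S),
      (∑ x, pXgS s x *
          (if y = x then Real.exp α / (Real.exp α + a - 1) else 1 / (Real.exp α + a - 1))) /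
      (∑ s', pS s' * ∑ x, pXgS s' x *
          (if y = x then Real.exp α / (Real.exp α + a - 1) else 1 / (Real.exp α + a - 1)))
      = (1 + (Real.exp α - 1) * pXgS s y) /
        (1 + (Real.exp α - 1) * ∑ s', pS s' * pXgS s' y) := by
  intro y s
  set c : ℝ := Real.exp α + a - 1 with hc
  have hc0 : 0 < c := by
    have h1 : (1:ℝ) ≤ Real.exp α := Real.one_le_exp hα
    have ha1 : (1:ℝ) ≤ a := by exact_mod_cast ha
    simp only [hc]; linarith
  have key : ∀ t : S,
      (∑ x, pXgS t x *
        (if y = x then Real.exp α / c else 1 / c))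
      = (1 + (Real.exp α - 1) * pXgS t y) / c := by
    intro t
    have : ∀ x : Fin a, pXgS t x * (if y = x then Real.exp α / c else 1 / c)
        = pXgS t x * (1 / c) + (if y = x then pXgS t x * ((Real.exp α - 1) / c) else 0) := by
      intro x
      by_cases h : y = x <;> simp [h] <;> ring
    rw [Finset.sum_congr rfl (fun x _ => this x), Finset.sum_add_distrib,
      ← Finset.sum_mul, hpXgS1 t, Finset.sum_ite_eq]
    simp
    field_simp
  rw [key s]
  have key2 : (∑ s', pS s' * ∑ x, pXgS s' x *
      (if y = x then Real.exp α / c else 1 / c))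
      = (1 + (Real.exp α - 1) * ∑ s', pS s' * pXgS s' y) / c := by
    rw [Finset.sum_congr rfl (fun t _ => by rw [key t])]
    have h2 : ∀ t : S, pS t * ((1 + (Real.exp α - 1) * pXgS t y) / c)
        = pS t / c + ((Real.exp α - 1) * (pS t * pXgS t y)) / c := by
      intro t; field_simp
    rw [Finset.sum_congr rfl (fun t _ => h2 t), Finset.sum_add_distrib,
      ← Finset.sum_div, ← Finset.sum_div, hpS1, ← Finset.mul_sum, ← add_div]
  rw [key2]
  by_cases hB : (1 + (Real.exp α - 1) * ∑ s', pS s' * pXgS s' y) = 0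
  · simp [hB]
  · field_simp
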